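/- For all real r > 0, k > 0 and α > k, the improper integral ∫_{α}^{∞} J_0(s r) · s/(s² − k²) ds converges, i.e. lim_{T→∞} ∫_{α}^{T} J_0(s r) · s/(s² − k²) ds exists in ℝ. (Well-definedness of the tail term in the dynamic filtered kernel g^α of Eq. (8), which requires α > k.) -/

import Mathlib

open MeasureTheory Real Filter intervalIntegral



noncomputable def G (x : ℝ) : ℝ := (1 / π) * ∫ θ in (0:ℝ)..π, Real.cos (x * Real.sin θ)
noncomputable def Gd (x : ℝ) : ℝ :=
  -(1 / π) * ∫ θ in (0:ℝ)..π, Real.sin θ * Real.sin (x * Real.sin θ)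
noncomputable def Gdd (x : ℝ) : ℝ :=
  -(1 / π) * ∫ θ in (0:ℝ)..π, Real.sin θ ^ 2 * Real.cos (x * Real.sin θ)

lemma hasDerivAt_G (x : ℝ) : HasDerivAt G (Gd x) x := by
  have main := intervalIntegral.hasDerivAt_integral_of_dominated_loc_of_deriv_le
    (μ := volume) (a := 0) (b := π) (x₀ := x)
    (F := fun x θ => Real.cos (x * Real.sin θ))
    (F' := fun x θ => -(Real.sin θ * Real.sin (x * Real.sin θ)))
    (bound := fun _ => 1) (s := Metric.ball x 1) (Metric.ball_mem_nhds x one_pos)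
    (Eventually.of_forall fun y => (Continuous.aestronglyMeasurable (by fun_prop)))
    (Continuous.intervalIntegrable (by fun_prop) _ _)
    (Continuous.aestronglyMeasurable (by fun_prop))
    (ae_of_all _ fun θ _ y _ => by
      rw [Real.norm_eq_abs, abs_neg, abs_mul]
      exact mul_le_one₀ (abs_sin_le_one _) (abs_nonneg _) (abs_sin_le_one _))
    intervalIntegrable_const
    (ae_of_all _ fun θ _ y _ => by
      have h := (Real.hasDerivAt_cos (y * Real.sin θ)).comp y
        ((hasDerivAt_id y).mul_const (Real.sin θ))
      refine h.congr_deriv ?_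
      ring)
  have h3 := main.2.const_mul (1/π)
  rw [intervalIntegral.integral_neg] at h3
  show HasDerivAt G (Gd x) x
  unfold G Gd
  refine h3.congr_deriv ?_
  ring

lemma hasDerivAt_Gd (x : ℝ) : HasDerivAt Gd (Gdd x) x := by
  have main := intervalIntegral.hasDerivAt_integral_of_dominated_loc_of_deriv_le
    (μ := volume) (a := 0) (b := π) (x₀ := x)
    (F := fun x θ => Real.sin θ * Real.sin (x * Real.sin θ))
    (F' := fun x θ => Real.sin θ ^ 2 * Real.cos (x * Real.sin θ))
    (bound := fun _ => 1) (s := Metric.ball x 1) (Metric.ball_mem_nhds x one_pos)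
    (Eventually.of_forall fun y => (Continuous.aestronglyMeasurable (by fun_prop)))
    (Continuous.intervalIntegrable (by fun_prop) _ _)
    (Continuous.aestronglyMeasurable (by fun_prop))
    (ae_of_all _ fun θ _ y _ => by
      rw [Real.norm_eq_abs, abs_mul, abs_pow]
      exact mul_le_one₀
        (pow_le_one₀ (abs_nonneg _) (abs_sin_le_one _)) (abs_nonneg _) (abs_cos_le_one _))
    intervalIntegrable_const
    (ae_of_all _ fun θ _ y _ => by
      have h := ((Real.hasDerivAt_sin (y * Real.sin θ)).comp y
        ((hasDerivAt_id y).mul_const (Real.sin θ))).const_mul (Real.sin θ)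
      refine h.congr_deriv ?_
      ring)
  have h3 := main.2.const_mul (-(1/π))
  show HasDerivAt Gd (Gdd x) x
  unfold Gd Gdd
  exact h3

lemma continuous_G : Continuous G :=
  continuous_iff_continuousAt.2 fun x => (hasDerivAt_G x).continuousAt

lemma continuous_Gd : Continuous Gd :=
  continuous_iff_continuousAt.2 fun x => (hasDerivAt_Gd x).continuousAt

lemma abs_Gd_le_one (x : ℝ) : |Gd x| ≤ 1 := by
  rw [Gd, abs_mul, abs_neg]
  have h := intervalIntegral.norm_integral_le_of_norm_le_const
    (C := 1) (f := fun θ => Real.sin θ * Real.sin (x * Real.sin θ)) (a := 0) (b := π)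
    (fun θ _ => by
      rw [Real.norm_eq_abs, abs_mul]
      exact mul_le_one₀ (abs_sin_le_one _) (abs_nonneg _) (abs_sin_le_one _))
  rw [Real.norm_eq_abs] at h
  have hπ : |(1:ℝ)/π| = 1/π := abs_of_pos (by positivity)
  have habs : |∫ θ in (0:ℝ)..π, Real.sin θ * Real.sin (x * Real.sin θ)| ≤ π := by
    simpa [abs_of_pos Real.pi_pos] using h
  rw [hπ]
  calc (1/π) * |∫ θ in (0:ℝ)..π, Real.sin θ * Real.sin (x * Real.sin θ)|
      ≤ (1/π) * π := by gcongr
    _ = 1 := by field_simp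

-- Bessel identity: Gd x + x * Gdd x = -x * G x
lemma bessel_identity (x : ℝ) : Gd x + x * Gdd x = -x * G x := by
  have key : (∫ θ in (0:ℝ)..π,
      (-(Real.sin θ * Real.sin (x * Real.sin θ)) + x * Real.cos θ ^ 2 * Real.cos (x * Real.sin θ)))
      = 0 := by
    have h : ∀ θ ∈ Set.uIcc (0:ℝ) π, HasDerivAt (fun θ => Real.cos θ * Real.sin (x * Real.sin θ))
        (-(Real.sin θ * Real.sin (x * Real.sin θ)) + x * Real.cos θ ^ 2 * Real.cos (x * Real.sin θ)) θ := by
      intro θ _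
      have h1 : HasDerivAt (fun θ => Real.sin (x * Real.sin θ))
          (Real.cos (x * Real.sin θ) * (x * Real.cos θ)) θ := by
        exact (Real.hasDerivAt_sin (x * Real.sin θ)).comp θ ((Real.hasDerivAt_sin θ).const_mul x)
      have := (Real.hasDerivAt_cos θ).mul h1
      refine this.congr_deriv ?_
      ring
    rw [intervalIntegral.integral_eq_sub_of_hasDerivAt h
      (Continuous.intervalIntegrable (by fun_prop) _ _)]
    simp
  -- rewrite cos² = 1 - sin²
  have key2 : (∫ θ in (0:ℝ)..π, Real.sin θ * Real.sin (x * Real.sin θ))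
      = x * (∫ θ in (0:ℝ)..π, Real.cos (x * Real.sin θ))
        - x * (∫ θ in (0:ℝ)..π, Real.sin θ ^ 2 * Real.cos (x * Real.sin θ)) := by
    have e : ∀ θ : ℝ, -(Real.sin θ * Real.sin (x * Real.sin θ))
        + x * Real.cos θ ^ 2 * Real.cos (x * Real.sin θ)
        = -(Real.sin θ * Real.sin (x * Real.sin θ))
          + (x * Real.cos (x * Real.sin θ) - x * (Real.sin θ ^ 2 * Real.cos (x * Real.sin θ))) := by
      intro θ
      linear_combination x * Real.cos (x * Real.sin θ) * (Real.sin_sq_add_cos_sq θ)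
    rw [intervalIntegral.integral_congr (fun θ _ => e θ)] at key
    rw [intervalIntegral.integral_add, intervalIntegral.integral_neg, intervalIntegral.integral_sub,
      intervalIntegral.integral_const_mul, intervalIntegral.integral_const_mul] at key
    · linarith
    · exact Continuous.intervalIntegrable (by fun_prop) _ _
    · exact Continuous.intervalIntegrable (by fun_prop) _ _
    · exact Continuous.intervalIntegrable (by fun_prop) _ _
    · exact Continuous.intervalIntegrable (by fun_prop) _ _
  rw [G, Gd, Gdd]
  have hπ : (π : ℝ) ≠ 0 := Real.pi_ne_zero
  rw [key2]
  ring



lemma wallis_prod (m : ℕ) :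
    (∏ i ∈ Finset.range m, (2 * (i : ℝ) + 1) / (2 * i + 2))
      = (Nat.factorial (2 * m) : ℝ) / (4 ^ m * (Nat.factorial m : ℝ) ^ 2) := by
  induction m with
  | zero => simp [Nat.factorial]
  | succ n ih =>
    rw [Finset.prod_range_succ, ih]
    have h1 : (2 * (n + 1)) = (2 * n + 1) + 1 := by ring
    rw [h1, Nat.factorial_succ, Nat.factorial_succ, Nat.factorial_succ]
    have hf : ((Nat.factorial n : ℝ)) ≠ 0 := Nat.cast_ne_zero.2 (Nat.factorial_ne_zero n)
    have h4 : (4 : ℝ) ^ n ≠ 0 := by positivity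
    push_cast
    field_simp
    ring

lemma sin_pow_integral (m : ℕ) :
    (∫ θ in (0:ℝ)..π, Real.sin θ ^ (2 * m))
      = π * ((Nat.factorial (2 * m) : ℝ) / (4 ^ m * (Nat.factorial m : ℝ) ^ 2)) := by
  rw [integral_sin_pow_even, wallis_prod]

/-- Bessel function of the first kind of order 0,
`J₀(x) = ∑ (−1)^m (x/2)^{2m} / (m!)²`. -/
noncomputable def J0 (x : ℝ) : ℝ :=
  ∑' m : ℕ, (-1 : ℝ) ^ m * (x / 2) ^ (2 * m) / ((Nat.factorial m : ℝ)) ^ 2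

lemma J0_eq (x : ℝ) : J0 x = (1 / π) * ∫ θ in (0:ℝ)..π, Real.cos (x * Real.sin θ) := by
  -- the summand as a continuous map
  have hc : ∀ m : ℕ, Continuous fun θ : ℝ =>
      ((-1 : ℝ) ^ m * x ^ (2 * m) / (Nat.factorial (2 * m) : ℝ)) * Real.sin θ ^ (2 * m) := by
    intro m; fun_prop
  set f : ℕ → C(ℝ, ℝ) := fun m => ⟨_, hc m⟩ with hf
  have hsum : Summable fun m : ℕ =>
      ‖(f m).restrict (⟨Set.uIcc (0:ℝ) π, isCompact_uIcc⟩ : TopologicalSpace.Compacts ℝ)‖ := by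
    have h0 : Summable fun m : ℕ => |x| ^ (2 * m) / (Nat.factorial (2 * m) : ℝ) := by
      have := Real.summable_pow_div_factorial |x|
      exact this.comp_injective (fun a b h => by omega)
    refine h0.of_nonneg_of_le (fun m => norm_nonneg _) (fun m => ?_)
    rw [ContinuousMap.norm_le _ (by positivity)]
    intro θ
    simp only [ContinuousMap.restrict_apply, hf, ContinuousMap.coe_mk]
    rw [Real.norm_eq_abs, abs_mul, abs_div, abs_mul, abs_pow, abs_pow, abs_neg, abs_one,
      one_pow, one_mul, Nat.abs_cast, abs_pow]
    exact mul_le_of_le_one_right (by positivity)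
      (pow_le_one₀ (abs_nonneg _) (abs_sin_le_one _))
  have key := tsum_intervalIntegral_eq_of_summable_norm (a := 0) (b := π) hsum
  -- pointwise: ∑ f m θ = cos (x sin θ)
  have hpt : ∀ θ : ℝ, (∑' m : ℕ, f m θ) = Real.cos (x * Real.sin θ) := by
    intro θ
    rw [Real.cos_eq_tsum]
    congr 1; funext m
    simp only [hf, ContinuousMap.coe_mk]
    rw [mul_pow]
    ring
  rw [intervalIntegral.integral_congr (g := fun θ => ∑' m : ℕ, f m θ)
      (fun θ _ => (hpt θ).symm), ← key]
  -- now compute each integral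
  have hterm : ∀ m : ℕ, (∫ θ in (0:ℝ)..π, f m θ)
      = π * ((-1 : ℝ) ^ m * (x / 2) ^ (2 * m) / ((Nat.factorial m : ℝ)) ^ 2) := by
    intro m
    simp only [hf, ContinuousMap.coe_mk]
    rw [intervalIntegral.integral_const_mul, sin_pow_integral]
    have hf2 : ((Nat.factorial (2*m) : ℝ)) ≠ 0 := Nat.cast_ne_zero.2 (Nat.factorial_ne_zero _)
    have hfm : ((Nat.factorial m : ℝ)) ≠ 0 := Nat.cast_ne_zero.2 (Nat.factorial_ne_zero _)
    have hx : (x / 2) ^ (2 * m) = x ^ (2*m) / 4 ^ m := by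
      rw [div_pow]
      congr 1
      rw [pow_mul]
      norm_num
    rw [hx]
    field_simp
  rw [J0]
  rw [tsum_congr hterm]
  rw [tsum_mul_left]
  have hπ : (π : ℝ) ≠ 0 := Real.pi_ne_zero
  field_simp

lemma J0_eq_G (x : ℝ) : J0 x = G x := J0_eq x

/-- Convergence of the tail integral `∫_α^∞ J₀(s r) · s/(s²−k²) ds` for `r > 0`, `k > 0`, `α > k`. -/
theorem dynamic_tail_converges (r k α : ℝ) (hr : 0 < r) (hk : 0 < k) (hα : k < α) :
    ∃ L : ℝ, Tendsto (fun T : ℝ => ∫ s in α..T, J0 (s * r) * (s / (s ^ 2 - k ^ 2)))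
      atTop (nhds L) := by
  have hαpos : 0 < α := hk.trans hα
  set H : ℝ → ℝ := fun s => s * Gd (s * r) * (s ^ 2 - k ^ 2)⁻¹ with hH
  set Φg : ℝ → ℝ := fun s => s * Gd (s * r) * (-(2 * s) / (s ^ 2 - k ^ 2) ^ 2) with hΦg
  -- positivity of denominator on Ici α
  have hden : ∀ s : ℝ, α ≤ s → 0 < s ^ 2 - k ^ 2 := by
    intro s hs; nlinarith
  -- integrability of Φg on Ioi α
  have hmeas : AEStronglyMeasurable Φg (volume.restrict (Set.Ioi α)) := by
    apply ContinuousOn.aestronglyMeasurable _ measurableSet_Ioi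
    apply ContinuousOn.mul
    · exact (continuousOn_id.mul (continuous_Gd.comp (continuous_id.mul continuous_const)).continuousOn)
    · apply ContinuousOn.div
      · fun_prop
      · fun_prop
      · intro s hs
        have := hden s (le_of_lt hs)
        positivity
  set c : ℝ := 1 - k ^ 2 / α ^ 2 with hc
  have hcpos : 0 < c := by
    rw [hc, sub_pos, div_lt_one (by positivity)]
    nlinarith
  have hint : IntegrableOn Φg (Set.Ioi α) volume := by
    have hbound : IntegrableOn (fun s : ℝ => (2 / c ^ 2) * s ^ (-2 : ℝ)) (Set.Ioi α) volume :=
      (integrableOn_Ioi_rpow_of_lt (by norm_num) hαpos).const_mul _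
    apply Integrable.mono' hbound hmeas
    filter_upwards [ae_restrict_mem measurableSet_Ioi] with s hs
    have hsα : α ≤ s := le_of_lt hs
    have hspos : 0 < s := lt_trans hαpos hs
    have hd := hden s hsα
    have hlow : c * s ^ 2 ≤ s ^ 2 - k ^ 2 := by
      rw [hc]
      have hs2 : α ^ 2 ≤ s ^ 2 := by nlinarith
      have : k ^ 2 / α ^ 2 * s ^ 2 ≥ k ^ 2 := by
        rw [ge_iff_le, div_mul_eq_mul_div, le_div_iff₀ (by positivity)]
        exact mul_le_mul_of_nonneg_left hs2 (by positivity)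
      nlinarith
    have hrw : s ^ (-2 : ℝ) = (s ^ 2)⁻¹ := by
      rw [show (-2 : ℝ) = -(2:ℕ) by norm_num, Real.rpow_neg hspos.le, Real.rpow_natCast]
    rw [Real.norm_eq_abs, hΦg, hrw]
    have h1 : |s * Gd (s * r) * (-(2 * s) / (s ^ 2 - k ^ 2) ^ 2)|
        ≤ s * 1 * (2 * s / (s ^ 2 - k ^ 2) ^ 2) := by
      rw [abs_mul, abs_mul, abs_of_pos hspos, abs_div, abs_neg,
        abs_of_pos (by positivity : (0:ℝ) < 2 * s),
        abs_of_pos (by positivity : (0:ℝ) < (s ^ 2 - k ^ 2) ^ 2)]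
      gcongr
      exact abs_Gd_le_one _
    refine h1.trans ?_
    have hd2 : (c * s ^ 2) ^ 2 ≤ (s ^ 2 - k ^ 2) ^ 2 :=
      pow_le_pow_left₀ (by positivity) hlow 2
    calc s * 1 * (2 * s / (s ^ 2 - k ^ 2) ^ 2)
        = 2 * s ^ 2 / (s ^ 2 - k ^ 2) ^ 2 := by ring
      _ ≤ 2 * s ^ 2 / (c * s ^ 2) ^ 2 := by gcongr
      _ = 2 / c ^ 2 * (s ^ 2)⁻¹ := by field_simp
  -- tendsto of the tail integral
  have htail := MeasureTheory.intervalIntegral_tendsto_integral_Ioi α hint tendsto_id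
  -- H T → 0
  have hHzero : Tendsto H atTop (nhds 0) := by
    apply squeeze_zero_norm' (a := fun T => 2 / T)
    · filter_upwards [eventually_ge_atTop (2 * k), eventually_ge_atTop 1] with T h1 h2
      have hTpos : 0 < T := by linarith
      have hd2 : T ^ 2 / 2 ≤ T ^ 2 - k ^ 2 := by nlinarith
      have hd2' : 0 < T ^ 2 - k ^ 2 := by nlinarith
      rw [hH, Real.norm_eq_abs, abs_mul, abs_mul, abs_of_pos hTpos,
        abs_of_pos (inv_pos.2 hd2')]
      calc T * |Gd (T * r)| * (T ^ 2 - k ^ 2)⁻¹ ≤ T * 1 * (T ^ 2 / 2)⁻¹ := by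
            gcongr
            exact abs_Gd_le_one _
        _ = 2 / T := by field_simp
    · exact Tendsto.div_atTop tendsto_const_nhds tendsto_id
  -- eventual equality
  have hev : ∀ᶠ T in atTop, (∫ s in α..T, J0 (s * r) * (s / (s ^ 2 - k ^ 2)))
      = (-(1 / r)) * (H T - H α) + (1 / r) * ∫ s in α..T, Φg s := by
    filter_upwards [eventually_ge_atTop α] with T hT
    have huIcc : Set.uIcc α T = Set.Icc α T := Set.uIcc_of_le hT
    set D : ℝ → ℝ := fun s =>
      (-(r * s * G (s * r))) * (s ^ 2 - k ^ 2)⁻¹ + Φg s with hD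
    have hderiv : ∀ s ∈ Set.uIcc α T, HasDerivAt H (D s) s := by
      intro s hs
      rw [huIcc] at hs
      have hsα : α ≤ s := hs.1
      have hd := hden s hsα
      have h1 : HasDerivAt (fun s : ℝ => s * Gd (s * r))
          (Gd (s * r) + s * (Gdd (s * r) * r)) s := by
        have := (hasDerivAt_id s).mul
          ((hasDerivAt_Gd (s * r)).comp s ((hasDerivAt_id s).mul_const r))
        refine this.congr_deriv ?_
        simp
      have h2 : HasDerivAt (fun s : ℝ => (s ^ 2 - k ^ 2)⁻¹)
          (-(2 * s) / ((s ^ 2 - k ^ 2) ^ 2)) s := by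
        have := (((hasDerivAt_pow 2 s).sub_const (k ^ 2))).inv (ne_of_gt hd)
        refine this.congr_deriv ?_
        simp
      have hmul := h1.mul h2
      have hb := bessel_identity (s * r)
      refine hmul.congr_deriv ?_
      rw [hD, hΦg]
      have : Gd (s * r) + s * (Gdd (s * r) * r) = -(s * r) * G (s * r) := by
        linear_combination hb
      rw [show (Gd (s * r) + s * (Gdd (s * r) * r)) = -(s * r) * G (s * r) from this]
      ring
    have hDcont : ContinuousOn D (Set.uIcc α T) := by
      rw [huIcc]
      have hconts : ∀ s ∈ Set.Icc α T, (s ^ 2 - k ^ 2) ≠ 0 := fun s hs => ne_of_gt (hden s hs.1)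
      apply ContinuousOn.add
      · apply ContinuousOn.mul
        · have hGr : Continuous fun s : ℝ => G (s * r) :=
            continuous_G.comp (continuous_id.mul continuous_const)
          exact ((continuous_const.mul continuous_id).mul hGr).neg.continuousOn
        · exact ContinuousOn.inv₀ (by fun_prop) hconts
      · apply ContinuousOn.mul
        · exact (continuousOn_id.mul
            (continuous_Gd.comp (continuous_id.mul continuous_const)).continuousOn)
        · exact ContinuousOn.div (by fun_prop) (by fun_prop)
            (fun s hs => by have := hden s hs.1; positivity)
    have hDint : IntervalIntegrable D volume α T := hDcont.intervalIntegrable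
    have hftc := intervalIntegral.integral_eq_sub_of_hasDerivAt hderiv hDint
    have hΦint : IntervalIntegrable Φg volume α T := by
      apply ContinuousOn.intervalIntegrable
      rw [huIcc]
      apply ContinuousOn.mul
      · exact (continuousOn_id.mul
          (continuous_Gd.comp (continuous_id.mul continuous_const)).continuousOn)
      · exact ContinuousOn.div (by fun_prop) (by fun_prop)
          (fun s hs => by have := hden s hs.1; positivity)
    have hsplit : (∫ s in α..T, J0 (s * r) * (s / (s ^ 2 - k ^ 2)))
        = ∫ s in α..T, ((-(1 / r)) * D s + (1 / r) * Φg s) := by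
      apply intervalIntegral.integral_congr
      intro s hs
      rw [huIcc] at hs
      have hd := hden s hs.1
      show J0 (s * r) * (s / (s ^ 2 - k ^ 2)) = -(1 / r) * D s + 1 / r * Φg s
      simp only [J0_eq_G, hD, hΦg]
      have hrne : r ≠ 0 := ne_of_gt hr
      field_simp
      ring
    rw [hsplit, intervalIntegral.integral_add (hDint.const_mul _) (hΦint.const_mul _),
      intervalIntegral.integral_const_mul, intervalIntegral.integral_const_mul, hftc]
  -- conclude
  refine ⟨(-(1 / r)) * (0 - H α) + (1 / r) * ∫ s in Set.Ioi α, Φg s, ?_⟩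
  have hlim : Tendsto (fun T => (-(1 / r)) * (H T - H α) + (1 / r) * ∫ s in α..T, Φg s)
      atTop (nhds ((-(1 / r)) * (0 - H α) + (1 / r) * ∫ s in Set.Ioi α, Φg s)) := by
    exact ((hHzero.sub_const (H α)).const_mul _).add (htail.const_mul _)
  exact Tendsto.congr' (hev.mono fun T h => h.symm) hlim
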